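/- Let n ≥ 2, let 2 ≤ k ≤ n and α > 0. There exists a positive constant θ depending only on n and k with the following property: for every λ = (λ₁,…,λ_n) ∈ Γ̃_k with λ₁ ≥ λ₂ ≥ ⋯ ≥ λ_n and every 1 ≤ j ≤ k − 1, one has S_k^{jj}(λ) ≥ θ S_k(λ) / λ_j (note that λ_j > 0 for j ≤ k − 1 since λ ∈ Γ_{k−1}). -/

import Mathlib

open scoped BigOperators

/-- The `k`-th elementary symmetric polynomial `σ_k(λ)` of `λ ∈ ℝⁿ`, indexed by `k : ℤ`,
with the conventions `σ₀ = 1` and `σ_k = 0` for `k < 0` or `k > n`. -/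
noncomputable def esymmZ (n : ℕ) (k : ℤ) (lam : Fin n → ℝ) : ℝ :=
  if k < 0 then 0 else ∑ s ∈ Finset.univ.powersetCard k.toNat, ∏ i ∈ s, lam i

/-- `S_k(λ) := σ_k(λ) + α σ_{k-1}(λ)`. -/
noncomputable def SZ (n : ℕ) (α : ℝ) (k : ℤ) (lam : Fin n → ℝ) : ℝ :=
  esymmZ n k lam + α * esymmZ n (k - 1) lam

/-- The Garding cone `Γ_m = {λ ∈ ℝⁿ : σ_j(λ) > 0 for j = 1,…,m}` (so `Γ₀ = ℝⁿ`). -/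
def Gamma (n : ℕ) (m : ℕ) : Set (Fin n → ℝ) :=
  {lam | ∀ j : ℕ, 1 ≤ j → j ≤ m → 0 < esymmZ n j lam}

/-- `Γ̃_k := Γ_{k-1} ∩ {λ : S_k(λ) > 0}`. -/
def GammaTilde (n : ℕ) (α : ℝ) (k : ℕ) : Set (Fin n → ℝ) :=
  Gamma n (k - 1) ∩ {lam | 0 < SZ n α k lam}

/-- `σ_k(λ|i)`: the `k`-th elementary symmetric polynomial of the vector obtained
from `λ` by deleting the entry `λ_i`. -/
noncomputable def esymmDel (n : ℕ) (k : ℤ) (lam : Fin n → ℝ) (i : Fin n) : ℝ :=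
  if k < 0 then 0 else
    ∑ s ∈ (Finset.univ.erase i).powersetCard k.toNat, ∏ j ∈ s, lam j

/-- `S_k(λ|i) := σ_k(λ|i) + α σ_{k-1}(λ|i)`.  In particular
`S_k^{ii}(λ) = ∂S_k/∂λ_i = S_{k-1}(λ|i) = SDel n α (k-1) lam i`. -/
noncomputable def SDel (n : ℕ) (α : ℝ) (k : ℤ) (lam : Fin n → ℝ) (i : Fin n) : ℝ :=
  esymmDel n k lam i + α * esymmDel n (k - 1) lam i

/-- `σ_k(λ|pq)`: the `k`-th elementary symmetric polynomial of the vector obtained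
from `λ` by deleting the entries `λ_p` and `λ_q`. -/
noncomputable def esymmDel2 (n : ℕ) (k : ℤ) (lam : Fin n → ℝ) (p q : Fin n) : ℝ :=
  if k < 0 then 0 else
    ∑ s ∈ ((Finset.univ.erase p).erase q).powersetCard k.toNat, ∏ l ∈ s, lam l

/-- `S_k^{pp,qq}(λ) = ∂²S_k/∂λ_p∂λ_q`, which equals
`σ_{k-2}(λ|pq) + α σ_{k-3}(λ|pq)` for `p ≠ q`, and `0` for `p = q`. -/
noncomputable def Spq (n : ℕ) (α : ℝ) (k : ℤ) (lam : Fin n → ℝ) (p q : Fin n) : ℝ :=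
  if p = q then 0 else esymmDel2 n (k - 2) lam p q + α * esymmDel2 n (k - 3) lam p q

namespace SkAux

open Multiset

lemma esymm_zero' (s : Multiset ℝ) : s.esymm 0 = 1 := by
  simp [Multiset.esymm, Multiset.powersetCard_zero_left]

lemma esymm_cons (a : ℝ) (s : Multiset ℝ) (k : ℕ) :
    (a ::ₘ s).esymm (k + 1) = a * s.esymm k + s.esymm (k + 1) := by
  simp only [Multiset.esymm, Multiset.powersetCard_cons, Multiset.map_add, Multiset.sum_add,
    Multiset.map_map]
  rw [add_comm]
  congr 1
  rw [← Multiset.sum_map_mul_left]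
  congr 1
  apply Multiset.map_congr rfl
  intro t _
  simp [Function.comp, Multiset.prod_cons]

lemma esymm_of_card_lt {s : Multiset ℝ} {k : ℕ} (h : Multiset.card s < k) : s.esymm k = 0 := by
  simp [Multiset.esymm, Multiset.powersetCard_eq_empty _ h]

lemma esymm_card (s : Multiset ℝ) : s.esymm (Multiset.card s) = s.prod := by
  induction s using Multiset.induction with
  | empty => simp [esymm_zero']
  | cons a t ih =>
      rw [Multiset.card_cons, esymm_cons, ih, esymm_of_card_lt (Nat.lt_succ_self _),
        Multiset.prod_cons, add_zero]

lemma esymm_one' (s : Multiset ℝ) : s.esymm 1 = s.sum := by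
  induction s using Multiset.induction with
  | empty => simp [Multiset.esymm, Multiset.powersetCard_zero_right]
  | cons a t ih =>
      have : (1 : ℕ) = 0 + 1 := rfl
      rw [this, esymm_cons, esymm_zero', ih, Multiset.sum_cons, mul_one]

lemma esymm_nonneg {s : Multiset ℝ} (h : ∀ a ∈ s, 0 ≤ a) (k : ℕ) : 0 ≤ s.esymm k := by
  induction s using Multiset.induction generalizing k with
  | empty =>
      cases k with
      | zero => simp [esymm_zero']
      | succ k => simp [esymm_of_card_lt (show Multiset.card (0:Multiset ℝ) < k+1 by simp)]
  | cons a t ih =>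
      cases k with
      | zero => simp [esymm_zero']
      | succ k =>
          rw [esymm_cons]
          have ha : 0 ≤ a := h a (Multiset.mem_cons_self _ _)
          have ht : ∀ b ∈ t, 0 ≤ b := fun b hb => h b (Multiset.mem_cons_of_mem hb)
          exact add_nonneg (mul_nonneg ha (ih ht k)) (ih ht (k + 1))

lemma esymm_pos {s : Multiset ℝ} (h : ∀ a ∈ s, 0 < a) {k : ℕ} (hk : k ≤ Multiset.card s) :
    0 < s.esymm k := by
  induction s using Multiset.induction generalizing k with
  | empty =>
      have : k = 0 := Nat.le_zero.mp (by simpa using hk)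
      simp [this, esymm_zero']
  | cons a t ih =>
      cases k with
      | zero => simp [esymm_zero']
      | succ k =>
          rw [esymm_cons]
          have ha : 0 < a := h a (Multiset.mem_cons_self _ _)
          have ht : ∀ b ∈ t, 0 < b := fun b hb => h b (Multiset.mem_cons_of_mem hb)
          have hk' : k ≤ Multiset.card t := by
            rw [Multiset.card_cons] at hk; omega
          have h1 : 0 < a * t.esymm k := mul_pos ha (ih ht hk')
          have h2 : 0 ≤ t.esymm (k + 1) := esymm_nonneg (fun b hb => (ht b hb).le) _
          linarith

lemma sq_sum_le_card_mul_sum_sq (s : Multiset ℝ) :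
    s.sum ^ 2 ≤ (Multiset.card s : ℝ) * (s.map (fun x => x ^ 2)).sum := by
  induction s using Multiset.induction with
  | empty => simp
  | cons a t ih =>
      have h1 : 2 * a * t.sum ≤ (Multiset.card t : ℝ) * a ^ 2 + (t.map (fun x => x ^ 2)).sum := by
        have h2 : (t.map fun x => 2 * a * x).sum ≤ (t.map fun x => a ^ 2 + x ^ 2).sum :=
          Multiset.sum_map_le_sum_map _ _ (fun x _ => by nlinarith [sq_nonneg (a - x)])
        rw [Multiset.sum_map_mul_left] at h2
        have h3 : (t.map fun x => a ^ 2 + x ^ 2).sum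
            = (Multiset.card t : ℝ) * a ^ 2 + (t.map (fun x => x ^ 2)).sum := by
          rw [Multiset.sum_map_add]
          simp [Multiset.map_const', mul_comm]
        rw [h3] at h2
        simpa [Multiset.map_id', mul_assoc] using h2
      rw [Multiset.sum_cons, Multiset.card_cons, Multiset.map_cons, Multiset.sum_cons]
      push_cast
      nlinarith [ih]

lemma esymm_two (s : Multiset ℝ) :
    2 * s.esymm 2 = s.sum ^ 2 - (s.map (fun x => x ^ 2)).sum := by
  induction s using Multiset.induction with
  | empty => simp [esymm_of_card_lt (show Multiset.card (0:Multiset ℝ) < 2 by simp)]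
  | cons a t ih =>
      have : (2 : ℕ) = 1 + 1 := rfl
      rw [this, esymm_cons, esymm_one']
      rw [Multiset.sum_cons, Multiset.map_cons, Multiset.sum_cons]
      have := ih
      ring_nf
      ring_nf at this
      nlinarith [this]

/-- reciprocal identity: for multisets with no zero entries,
`esymm (card s - i) s = s.prod * esymm i (s.map (·⁻¹))`. -/
lemma esymm_reciprocal (s : Multiset ℝ) (hs : ∀ a ∈ s, a ≠ 0) (i : ℕ) (hi : i ≤ Multiset.card s) :
    s.esymm (Multiset.card s - i) = s.prod * (s.map (fun x => x⁻¹)).esymm i := by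
  induction s using Multiset.induction generalizing i with
  | empty =>
      have : i = 0 := by simpa using hi
      simp [this, esymm_zero']
  | cons a t ih =>
      have ha : a ≠ 0 := hs a (Multiset.mem_cons_self _ _)
      have ht : ∀ b ∈ t, b ≠ 0 := fun b hb => hs b (Multiset.mem_cons_of_mem hb)
      rw [Multiset.card_cons] at hi
      rw [Multiset.map_cons, Multiset.prod_cons, Multiset.card_cons]
      cases i with
      | zero =>
          rw [Nat.sub_zero, esymm_zero', mul_one]
          rw [show Multiset.card t + 1 = Multiset.card (a ::ₘ t) by simp, esymm_card,
            Multiset.prod_cons]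
      | succ i =>
          have hit : i ≤ Multiset.card t := by omega
          have hstep : Multiset.card t + 1 - (i + 1) = Multiset.card t - i := by omega
          rw [hstep]
          have hwcard : Multiset.card (t.map (fun x : ℝ => x⁻¹)) = Multiset.card t := by simp
          rcases Nat.lt_or_ge (Multiset.card t) (i + 1) with hlt | hge
          · -- card t = i, so card t - i = 0
            have hci : Multiset.card t = i := by omega
            have hL : (a ::ₘ t).esymm (Multiset.card t - i) = 1 := by
              rw [hci, Nat.sub_self, esymm_zero']
            have hcw : i + 1 = Multiset.card (a⁻¹ ::ₘ t.map (fun x : ℝ => x⁻¹)) := by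
              simp [hci]
            rw [hL, hcw, esymm_card, Multiset.prod_cons]
            have htp : t.prod ≠ 0 := Multiset.prod_ne_zero (fun h => ht 0 h rfl)
            have hip : (t.map (fun x : ℝ => x⁻¹)).prod = t.prod⁻¹ := by
              simpa using Multiset.prod_map_inv' t
            rw [hip]
            field_simp
          · -- card t - i = (card t - (i+1)) + 1
            have hsplit : Multiset.card t - i = (Multiset.card t - (i + 1)) + 1 := by omega
            rw [hsplit, esymm_cons, esymm_cons, ← hsplit, ih ht (i + 1) hge, ih ht i hit]
            field_simp
            ring

lemma newton_base (s : Multiset ℝ) (k : ℕ) (hcard : Multiset.card s = k + 2) :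
    2 * ((k : ℝ) + 2) * (s.esymm k * s.esymm (k + 2)) ≤ ((k : ℝ) + 1) * s.esymm (k + 1) ^ 2 := by
  by_cases h0 : (0 : ℝ) ∈ s
  · have hp : s.esymm (k + 2) = 0 := by
      rw [← hcard, esymm_card]
      exact Multiset.prod_eq_zero h0
    rw [hp]
    have : ((k : ℝ) + 1) * s.esymm (k + 1) ^ 2 ≥ 0 := by positivity
    nlinarith
  · have hs : ∀ a ∈ s, a ≠ 0 := fun a ha h => h0 (h ▸ ha)
    set w := s.map (fun x : ℝ => x⁻¹) with hw
    have hcw : Multiset.card w = k + 2 := by simp [hw, hcard]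
    have e2 : s.esymm k = s.prod * w.esymm 2 := by
      have := esymm_reciprocal s hs 2 (by omega)
      rwa [show Multiset.card s - 2 = k by omega] at this
    have e1 : s.esymm (k + 1) = s.prod * w.esymm 1 := by
      have := esymm_reciprocal s hs 1 (by omega)
      rwa [show Multiset.card s - 1 = k + 1 by omega] at this
    have e0 : s.esymm (k + 2) = s.prod := by
      rw [← hcard, esymm_card]
    have hQ : w.sum ^ 2 ≤ ((k : ℝ) + 2) * (w.map (fun x => x ^ 2)).sum := by
      have := sq_sum_le_card_mul_sum_sq w
      rw [hcw] at this
      push_cast at this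
      exact this
    have h2 : 2 * w.esymm 2 = w.sum ^ 2 - (w.map (fun x => x ^ 2)).sum := esymm_two w
    have h1 : w.esymm 1 = w.sum := esymm_one' w
    have hpr : s.prod ≠ 0 := Multiset.prod_ne_zero (fun h => hs 0 h rfl)
    have hpr2 : 0 < s.prod ^ 2 := by positivity
    rw [e2, e1, e0, h1]
    have hh : w.sum ^ 2 * s.prod ^ 2 ≤ ((k : ℝ) + 2) * (w.map (fun x => x ^ 2)).sum * s.prod ^ 2 :=
      mul_le_mul_of_nonneg_right hQ hpr2.le
    have h2' : 2 * w.esymm 2 * s.prod ^ 2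
        = (w.sum ^ 2 - (w.map (fun x => x ^ 2)).sum) * s.prod ^ 2 := by rw [h2]
    nlinarith [hh, h2']

open Polynomial in
lemma deriv_step (s : Multiset ℝ) :
    ∃ s' : Multiset ℝ, Multiset.card s' = Multiset.card s - 1 ∧
      ∀ i : ℕ, i ≤ Multiset.card s - 1 →
        (Multiset.card s : ℝ) * s'.esymm i = ((Multiset.card s - i : ℕ) : ℝ) * s.esymm i := by
  set m := Multiset.card s with hm
  rcases Nat.eq_zero_or_pos m with hm0 | hmpos
  · exact ⟨0, by simp [hm0], fun i hi => by
      have : i = 0 := by omega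
      simp [this, esymm_zero', hm0]⟩
  set g : ℝ[X] := (s.map fun a => X - C a).prod with hg
  have hgmonic : g.Monic := monic_multiset_prod_of_monic _ _ (fun a _ => monic_X_sub_C a)
  have hgroots : g.roots = s := roots_multiset_prod_X_sub_C s
  have hgdeg : g.natDegree = m := by
    rw [hg, natDegree_multiset_prod_X_sub_C_eq_card]
  have hdcard : Multiset.card (derivative g).roots = m - 1 := by
    have h1 : Multiset.card g.roots ≤ Multiset.card (derivative g).roots + 1 :=
      card_roots_le_derivative g
    rw [hgroots] at h1
    have h2 : Multiset.card (derivative g).roots ≤ (derivative g).natDegree := card_roots' _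
    have h3 : (derivative g).natDegree ≤ m - 1 := hgdeg ▸ natDegree_derivative_le g
    omega
  have hddeg : (derivative g).natDegree = m - 1 := by
    have h2 : Multiset.card (derivative g).roots ≤ (derivative g).natDegree := card_roots' _
    have h3 : (derivative g).natDegree ≤ m - 1 := hgdeg ▸ natDegree_derivative_le g
    omega
  have hsplit : C (derivative g).leadingCoeff
      * ((derivative g).roots.map fun a => X - C a).prod = derivative g :=
    C_leadingCoeff_mul_prod_multiset_X_sub_C (by rw [hdcard, hddeg])
  have hlead : (derivative g).leadingCoeff = (m : ℝ) := by
    rw [leadingCoeff, hddeg]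
    rw [coeff_derivative]
    have : m - 1 + 1 = m := by omega
    rw [this]
    have : g.coeff m = 1 := by
      have := hgmonic
      rw [Monic, leadingCoeff, hgdeg] at this
      exact this
    rw [this, one_mul]
    push_cast [Nat.cast_sub hmpos]
    ring
  refine ⟨(derivative g).roots, by rw [hdcard], fun i hi => ?_⟩
  -- coefficient of g at m - i
  have hcoeffg : g.coeff (m - i) = (-1) ^ i * s.esymm i := by
    have hneg : s.map (fun a : ℝ => X - C a) = (s.map Neg.neg).map (fun r => X + C r) := by
      rw [Multiset.map_map]
      apply Multiset.map_congr rfl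
      intro a _
      simp [sub_eq_add_neg]
    have hcs : Multiset.card (s.map Neg.neg) = m := by simp [hm]
    have h := Multiset.prod_X_add_C_coeff (s.map Neg.neg)
      (show m - i ≤ Multiset.card (s.map Neg.neg) by omega)
    rw [hg, hneg, h, hcs, show m - (m - i) = i by omega, Multiset.esymm_neg]
  -- coefficient of derivative g at m - 1 - i
  have hcoeffd : (derivative g).coeff (m - 1 - i) = (m : ℝ) * ((-1) ^ i * ((derivative g).roots.esymm i)) := by
    conv_lhs => rw [← hsplit]
    rw [hlead]
    rw [coeff_C_mul]
    congr 1
    have hneg : (derivative g).roots.map (fun a : ℝ => X - C a)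
        = ((derivative g).roots.map Neg.neg).map (fun r => X + C r) := by
      rw [Multiset.map_map]
      apply Multiset.map_congr rfl
      intro a _
      simp [sub_eq_add_neg]
    have hcs : Multiset.card ((derivative g).roots.map Neg.neg) = m - 1 := by simp [hdcard]
    have h := Multiset.prod_X_add_C_coeff ((derivative g).roots.map Neg.neg)
      (show m - 1 - i ≤ Multiset.card ((derivative g).roots.map Neg.neg) by omega)
    rw [hneg, h, hcs, show m - 1 - (m - 1 - i) = i by omega, Multiset.esymm_neg]
  have hcd2 : (derivative g).coeff (m - 1 - i) = g.coeff (m - i) * ((m - i : ℕ) : ℝ) := by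
    rw [coeff_derivative, show m - 1 - i + 1 = m - i by omega]
    congr 1
    norm_cast
    omega
  have hfinal : (m : ℝ) * ((-1) ^ i * ((derivative g).roots.esymm i))
      = (-1) ^ i * s.esymm i * ((m - i : ℕ) : ℝ) := by
    rw [← hcoeffd, hcd2, hcoeffg]
  have hpow : ((-1 : ℝ) ^ i) ≠ 0 := by
    apply pow_ne_zero; norm_num
  have h' : (-1 : ℝ) ^ i * ((m : ℝ) * ((derivative g).roots.esymm i))
      = (-1 : ℝ) ^ i * (((m - i : ℕ) : ℝ) * s.esymm i) := by
    linear_combination hfinal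
  exact mul_left_cancel₀ hpow h'

lemma choose_id (m i : ℕ) (hm : 1 ≤ m) : m * (m - 1).choose i = (m - i) * m.choose i := by
  rcases Nat.lt_or_ge i m with hi | hi
  · have h1 := Nat.add_one_mul_choose_eq (m - 1) i
    rw [show m - 1 + 1 = m by omega] at h1
    rw [h1, Nat.choose_succ_right_eq]
    ring
  · have h1 : (m - 1).choose i = 0 := Nat.choose_eq_zero_of_lt (by omega)
    have h2 : m - i = 0 := by omega
    rw [h1, h2]
    simp

lemma newton_aux (N : ℕ) : ∀ (s : Multiset ℝ) (j : ℕ), Multiset.card s = N → j + 2 ≤ N →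
    s.esymm j * s.esymm (j + 2) * ((N.choose (j + 1) : ℕ) : ℝ) ^ 2 ≤
      s.esymm (j + 1) ^ 2 * (((N.choose j : ℕ) : ℝ) * ((N.choose (j + 2) : ℕ) : ℝ)) := by
  induction N using Nat.strong_induction_on with
  | _ N IH =>
    intro s j hcard hjN
    rcases Nat.eq_or_lt_of_le hjN with hbase | hstep
    · -- base case N = j + 2
      subst hbase
      have hb := newton_base s j hcard
      have hn : (j + 2).choose j * 2 = (j + 2) * (j + 1) := by
        have hsymm : (j + 2).choose j = (j + 2).choose 2 := by
          have := Nat.choose_symm (show 2 ≤ j + 2 by omega)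
          simpa using this
        have h1 : (j + 2) * (j + 1).choose 1 = (j + 2).choose 2 * 2 :=
          Nat.add_one_mul_choose_eq (j + 1) 1
        rw [Nat.choose_one_right] at h1
        rw [hsymm, ← h1]
      have hnc : (((j + 2).choose j : ℕ) : ℝ) * 2 = ((j : ℝ) + 2) * ((j : ℝ) + 1) := by
        exact_mod_cast congrArg (fun x : ℕ => (x : ℝ)) hn
      rw [Nat.choose_succ_self_right, Nat.choose_self]
      push_cast
      have hmul := mul_le_mul_of_nonneg_left hb (show (0 : ℝ) ≤ ((j : ℝ) + 2) / 2 by positivity)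
      nlinarith [hmul, hnc]
    · -- inductive step: N ≥ j + 3
      obtain ⟨s', hcard', hco⟩ := deriv_step s
      rw [hcard] at hcard' hco
      set mr : ℝ := (N : ℝ) with hmr
      have hcast : ∀ i : ℕ, i ≤ N → ((N - i : ℕ) : ℝ) = mr - i := by
        intro i hi
        rw [Nat.cast_sub hi]
      have h1 : mr * s'.esymm j = (mr - j) * s.esymm j := by
        have := hco j (by omega)
        rw [hcast j (by omega)] at this
        exact this
      have h2 : mr * s'.esymm (j + 2) = (mr - ((j : ℝ) + 2)) * s.esymm (j + 2) := by
        have := hco (j + 2) (by omega)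
        rw [hcast (j + 2) (by omega)] at this
        push_cast at this
        push_cast
        linarith [this]
      have h3 : mr * s'.esymm (j + 1) = (mr - ((j : ℝ) + 1)) * s.esymm (j + 1) := by
        have := hco (j + 1) (by omega)
        rw [hcast (j + 1) (by omega)] at this
        push_cast at this
        push_cast
        linarith [this]
      have hch : ∀ i : ℕ, i ≤ N → mr * (((N - 1).choose i : ℕ) : ℝ)
          = (mr - i) * ((N.choose i : ℕ) : ℝ) := by
        intro i hi
        have := choose_id N i (by omega)
        have hc := congrArg (fun x : ℕ => (x : ℝ)) this
        push_cast at hc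
        rw [Nat.cast_sub hi] at hc
        exact hc
      have h4 : mr * (((N - 1).choose (j + 1) : ℕ) : ℝ)
          = (mr - ((j : ℝ) + 1)) * ((N.choose (j + 1) : ℕ) : ℝ) := by
        have := hch (j + 1) (by omega); push_cast at this ⊢; linarith
      have h5 : mr * (((N - 1).choose j : ℕ) : ℝ)
          = (mr - j) * ((N.choose j : ℕ) : ℝ) := hch j (by omega)
      have h6 : mr * (((N - 1).choose (j + 2) : ℕ) : ℝ)
          = (mr - ((j : ℝ) + 2)) * ((N.choose (j + 2) : ℕ) : ℝ) := by
        have := hch (j + 2) (by omega); push_cast at this ⊢; linarith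
      have hIH := IH (N - 1) (by omega) s' j hcard' (by omega)
      have hK : (0 : ℝ) < (mr - j) * ((mr - ((j : ℝ) + 2)) * (mr - ((j : ℝ) + 1)) ^ 2) := by
        have : (j : ℝ) + 3 ≤ mr := by
          rw [hmr]; exact_mod_cast hstep
        have e1 : (0:ℝ) < mr - j := by linarith
        have e2 : (0:ℝ) < mr - ((j:ℝ) + 2) := by linarith
        have e4 : (0:ℝ) < mr - ((j:ℝ) + 1) := by linarith
        have e3 : (0:ℝ) < (mr - ((j:ℝ) + 1)) ^ 2 := pow_pos e4 2
        exact mul_pos e1 (mul_pos e2 e3)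
      rw [← mul_le_mul_iff_right₀ hK]
      have key1 : (mr * s'.esymm j) * (mr * s'.esymm (j + 2)) * (mr * (((N - 1).choose (j + 1) : ℕ) : ℝ)) ^ 2
          = ((mr - j) * s.esymm j) * ((mr - ((j : ℝ) + 2)) * s.esymm (j + 2))
            * ((mr - ((j : ℝ) + 1)) * ((N.choose (j + 1) : ℕ) : ℝ)) ^ 2 := by
        rw [h1, h2, h4]
      have key2 : (mr * s'.esymm (j + 1)) ^ 2 * ((mr * (((N - 1).choose j : ℕ) : ℝ)) * (mr * (((N - 1).choose (j + 2) : ℕ) : ℝ)))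
          = ((mr - ((j : ℝ) + 1)) * s.esymm (j + 1)) ^ 2
            * (((mr - j) * ((N.choose j : ℕ) : ℝ)) * ((mr - ((j : ℝ) + 2)) * ((N.choose (j + 2) : ℕ) : ℝ))) := by
        rw [h3, h5, h6]
      calc (mr - j) * ((mr - ((j : ℝ) + 2)) * (mr - ((j : ℝ) + 1)) ^ 2)
            * (s.esymm j * s.esymm (j + 2) * ((N.choose (j + 1) : ℕ) : ℝ) ^ 2)
          = mr ^ 4 * (s'.esymm j * s'.esymm (j + 2) * ((((N - 1).choose (j + 1) : ℕ)) : ℝ) ^ 2) := by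
            linear_combination -key1
        _ ≤ mr ^ 4 * (s'.esymm (j + 1) ^ 2 * ((((N - 1).choose j : ℕ) : ℝ) * (((N - 1).choose (j + 2) : ℕ) : ℝ))) := by
            apply mul_le_mul_of_nonneg_left hIH (by positivity)
        _ = (mr - j) * ((mr - ((j : ℝ) + 2)) * (mr - ((j : ℝ) + 1)) ^ 2)
            * (s.esymm (j + 1) ^ 2 * (((N.choose j : ℕ) : ℝ) * ((N.choose (j + 2) : ℕ) : ℝ))) := by
            linear_combination key2

/-- Newton's inequality, unnormalized corollary: `e_k² ≥ e_{k-1} e_{k+1}` (levels `j, j+1, j+2`). -/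
lemma newton_corollary (s : Multiset ℝ) (j : ℕ) :
    s.esymm j * s.esymm (j + 2) ≤ s.esymm (j + 1) ^ 2 := by
  rcases Nat.lt_or_ge (Multiset.card s) (j + 2) with h | h
  · rw [esymm_of_card_lt h, mul_zero]
    positivity
  · set N := Multiset.card s with hN
    have hmain := newton_aux N s j rfl h
    rcases le_or_gt (s.esymm j * s.esymm (j + 2)) 0 with h0 | h0
    · nlinarith [sq_nonneg (s.esymm (j + 1))]
    · -- use binomial log-concavity
      have hbin : (N.choose j : ℝ) * (N.choose (j + 2) : ℝ) ≤ ((N.choose (j + 1) : ℝ)) ^ 2 := by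
        have hnat : N.choose j * N.choose (j + 2) * ((j + 2) * (N - j)) ≤
            N.choose (j + 1) ^ 2 * ((j + 2) * (N - j)) := by
          have e1 : N.choose (j + 1) * (j + 1) = N.choose j * (N - j) :=
            Nat.choose_succ_right_eq N j
          have e2 : N.choose (j + 2) * (j + 2) = N.choose (j + 1) * (N - (j + 1)) :=
            Nat.choose_succ_right_eq N (j + 1)
          calc N.choose j * N.choose (j + 2) * ((j + 2) * (N - j))
              = (N.choose j * (N - j)) * (N.choose (j + 2) * (j + 2)) := by ring
            _ = (N.choose (j + 1) * (j + 1)) * (N.choose (j + 1) * (N - (j + 1))) := by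
                rw [e1, e2]
            _ = N.choose (j + 1) ^ 2 * ((j + 1) * (N - (j + 1))) := by ring
            _ ≤ N.choose (j + 1) ^ 2 * ((j + 2) * (N - j)) := by
                apply Nat.mul_le_mul_left
                apply Nat.mul_le_mul (by omega) (by omega)
        have hpos : 0 < (j + 2) * (N - j) := by
          apply Nat.mul_pos (by omega) (by omega)
        have := Nat.le_of_mul_le_mul_right hnat hpos
        exact_mod_cast this
      have hc1 : (0:ℝ) < (N.choose (j+1) : ℝ) := by
        have : 0 < N.choose (j + 1) := Nat.choose_pos (by omega)
        exact_mod_cast this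
      have hb2 : (0:ℝ) ≤ s.esymm (j + 1) ^ 2 := sq_nonneg _
      have step1 : s.esymm (j + 1) ^ 2 * ((N.choose j : ℝ) * (N.choose (j + 2) : ℝ))
          ≤ s.esymm (j + 1) ^ 2 * ((N.choose (j + 1) : ℝ)) ^ 2 :=
        mul_le_mul_of_nonneg_left hbin hb2
      have step2 := le_trans hmain step1
      exact le_of_mul_le_mul_right step2 (pow_pos hc1 2)

lemma exists_min (s : Multiset ℝ) (hs : s ≠ 0) : ∃ a ∈ s, ∀ b ∈ s, a ≤ b := by
  induction s using Multiset.induction with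
  | empty => exact absurd rfl hs
  | cons a t ih =>
      rcases eq_or_ne t 0 with ht | ht
      · subst ht
        exact ⟨a, Multiset.mem_cons_self _ _, fun b hb => by
          rw [Multiset.mem_cons] at hb
          rcases hb with h | h
          · exact h.ge
          · simp at h⟩
      · obtain ⟨m, hm, hmin⟩ := ih ht
        rcases le_total a m with h | h
        · exact ⟨a, Multiset.mem_cons_self _ _, fun b hb => by
            rw [Multiset.mem_cons] at hb
            rcases hb with hb | hb
            · exact hb.ge
            · exact h.trans (hmin b hb)⟩
        · exact ⟨m, Multiset.mem_cons_of_mem hm, fun b hb => by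
            rw [Multiset.mem_cons] at hb
            rcases hb with hb | hb
            · exact hb ▸ h
            · exact hmin b hb⟩

lemma exists_max (s : Multiset ℝ) (hs : s ≠ 0) : ∃ a ∈ s, ∀ b ∈ s, b ≤ a := by
  obtain ⟨a, ha, hmin⟩ := exists_min (s.map Neg.neg) (by simpa using hs)
  rw [Multiset.mem_map] at ha
  obtain ⟨x, hx, rfl⟩ := ha
  exact ⟨x, hx, fun b hb => by
    have := hmin (-b) (Multiset.mem_map_of_mem _ hb)
    linarith⟩

/-- The Garding cone condition for multisets. -/
def Gam (k : ℕ) (s : Multiset ℝ) : Prop := ∀ m : ℕ, 1 ≤ m → m ≤ k → 0 < s.esymm m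

lemma gam_mono {k k' : ℕ} {s : Multiset ℝ} (h : Gam k s) (hk : k' ≤ k) : Gam k' s :=
  fun m h1 h2 => h m h1 (h2.trans hk)

lemma gam_card {k : ℕ} {s : Multiset ℝ} (h : Gam k s) (hk : 1 ≤ k) : k ≤ Multiset.card s := by
  by_contra hc
  push_neg at hc
  have := h k hk le_rfl
  rw [esymm_of_card_lt hc] at this
  exact lt_irrefl _ this

lemma cons_esymm_eq {s : Multiset ℝ} {a : ℝ} (ha : a ∈ s) (k : ℕ) :
    s.esymm (k + 1) = a * (s.erase a).esymm k + (s.erase a).esymm (k + 1) := by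
  conv_lhs => rw [← Multiset.cons_erase ha]
  exact esymm_cons a (s.erase a) k

/-- Deleting a minimal element preserves membership in `Γ_k` (when `card s > k`). -/
lemma gam_erase_min {k : ℕ} {s : Multiset ℝ} {a : ℝ} (hG : Gam k s) (ha : a ∈ s)
    (hmin : ∀ b ∈ s, a ≤ b) (hcard : k < Multiset.card s) : Gam k (s.erase a) := by
  induction k with
  | zero => exact fun m h1 h2 => absurd (h1.trans h2) (by omega)
  | succ k ih =>
      have hGk : Gam k (s.erase a) := ih (gam_mono hG (by omega)) (by omega)
      intro m h1 h2
      rcases Nat.lt_or_ge m (k + 1) with hm | hm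
      · exact hGk m h1 (by omega)
      · have hmk : m = k + 1 := by omega
        subst hmk
        have hrec := cons_esymm_eq ha k
        have htk : 0 < (s.erase a).esymm k := by
          rcases Nat.eq_zero_or_pos k with h0 | h0
          · rw [h0, esymm_zero']; norm_num
          · exact hGk k h0 le_rfl
        rcases lt_or_ge a 0 with hneg | hpos
        · have hs := hG (k + 1) (by omega) le_rfl
          nlinarith [hrec, hs, htk]
        · -- all entries nonnegative
          have hnn : ∀ b ∈ s.erase a, 0 ≤ b := fun b hb =>
            hpos.trans (hmin b (Multiset.mem_of_le (Multiset.erase_le a s) hb))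
          have hge : 0 ≤ (s.erase a).esymm (k + 1) := esymm_nonneg hnn _
          rcases lt_or_eq_of_le hge with h | h
          · exact h
          · exfalso
            have hs := hG (k + 1) (by omega) le_rfl
            have hae : s.esymm (k + 1) = a * (s.erase a).esymm k := by
              rw [hrec, ← h, add_zero]
            have hapos : 0 < a := by
              rcases lt_or_eq_of_le hpos with h' | h'
              · exact h'
              · exfalso; rw [hae, ← h', zero_mul] at hs; exact lt_irrefl _ hs
            have hallpos : ∀ b ∈ s.erase a, 0 < b := fun b hb =>
              lt_of_lt_of_le hapos (hmin b (Multiset.mem_of_le (Multiset.erase_le a s) hb))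
            have : 0 < (s.erase a).esymm (k + 1) :=
              esymm_pos hallpos (by rw [Multiset.card_erase_of_mem ha, Nat.pred_eq_sub_one]; omega)
            rw [← h] at this
            exact lt_irrefl _ this

/-- If `card s = k` and `s ∈ Γ_k` then all entries are positive. -/
lemma gam_full_pos {k : ℕ} {s : Multiset ℝ} (hG : Gam k s) (hcard : Multiset.card s = k) :
    ∀ a ∈ s, 0 < a := by
  induction k generalizing s with
  | zero =>
      intro a ha
      rw [Multiset.card_eq_zero] at hcard
      subst hcard
      simp at ha
  | succ k ih =>
      intro a ha
      have hs0 : s ≠ 0 := by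
        intro h; rw [h] at hcard; simp at hcard
      obtain ⟨b, hb, hbmin⟩ := exists_min s hs0
      rcases lt_or_ge 0 b with hbpos | hbneg
      · exact lt_of_lt_of_le hbpos (hbmin a ha)
      · exfalso
        set t := s.erase b with htdef
        have hcardt : Multiset.card t = k := by
          rw [htdef, Multiset.card_erase_of_mem hb, hcard, Nat.pred_succ]
        have htpos : ∀ m : ℕ, m ≤ k → 0 < t.esymm m := by
          intro m hm
          induction m with
          | zero => rw [esymm_zero']; norm_num
          | succ m ihm =>
              have h1 := cons_esymm_eq hb m
              have h2 := hG (m + 1) (by omega) (by omega)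
              have h3 := ihm (by omega)
              nlinarith [h1, h2, h3]
        have hGt : Gam k t := fun m h1 h2 => htpos m h2
        have hallpos : ∀ x ∈ t, 0 < x := ih hGt hcardt
        have htop := hG (k + 1) (by omega) le_rfl
        have h1 := cons_esymm_eq hb k
        have h2 : t.esymm (k + 1) = 0 := esymm_of_card_lt (by omega)
        have h3 : 0 < t.esymm k := by
          rcases Nat.eq_zero_or_pos k with h0 | h0
          · rw [h0, esymm_zero']; norm_num
          · exact htpos k le_rfl
        nlinarith [h1, h2, h3, htop]

/-- Core positivity: deleting any entry from a `Γ_{k+1}` multiset keeps `esymm k` positive. -/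
lemma core_pos : ∀ (n : ℕ) (s : Multiset ℝ) (k : ℕ) (a : ℝ), Multiset.card s = n →
    Gam (k + 1) s → a ∈ s → 0 < (s.erase a).esymm k := by
  intro n
  induction n using Nat.strong_induction_on with
  | _ n IH =>
    intro s k a hn hG ha
    rcases Nat.eq_zero_or_pos k with hk0 | hkpos
    · rw [hk0, esymm_zero']; norm_num
    have hcard : k + 1 ≤ Multiset.card s := gam_card hG (by omega)
    rcases Nat.eq_or_lt_of_le hcard with heq | hlt
    · -- card s = k + 1 : all entries positive
      have hallpos := gam_full_pos hG heq.symm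
      have : ∀ x ∈ s.erase a, 0 < x := fun x hx =>
        hallpos x (Multiset.mem_of_le (Multiset.erase_le a s) hx)
      exact esymm_pos this (by rw [Multiset.card_erase_of_mem ha, Nat.pred_eq_sub_one]; omega)
    · obtain ⟨b, hb, hbmin⟩ := exists_min s (by
        intro h0; rw [h0] at hlt; simp at hlt)
      rcases eq_or_ne a b with hab | hab
      · subst hab
        have := gam_erase_min hG hb hbmin (by omega)
        exact this k hkpos (by omega)
      · have hbea : b ∈ s.erase a := (Multiset.mem_erase_of_ne (Ne.symm hab)).mpr hb
        have haeb : a ∈ s.erase b := (Multiset.mem_erase_of_ne hab).mpr ha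
        have hGb : Gam (k + 1) (s.erase b) := gam_erase_min hG hb hbmin (by omega)
        have hcb : Multiset.card (s.erase b) = n - 1 := by
          rw [Multiset.card_erase_of_mem hb, hn, Nat.pred_eq_sub_one]
        have hnpos : 1 ≤ n := by omega
        set u := (s.erase b).erase a with hudef
        -- k = k' + 1
        obtain ⟨k', rfl⟩ : ∃ k', k = k' + 1 := ⟨k - 1, by omega⟩
        have hA : 0 < u.esymm k' :=
          IH (n - 1) (by omega) (s.erase b) k' a hcb (gam_mono hGb (by omega)) haeb
        have hB : 0 < u.esymm (k' + 1) :=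
          IH (n - 1) (by omega) (s.erase b) (k' + 1) a hcb hGb haeb
        -- goal: 0 < (s.erase a).esymm (k'+1)
        have hgoal_eq : (s.erase a).esymm (k' + 1)
            = b * ((s.erase a).erase b).esymm k' + ((s.erase a).erase b).esymm (k' + 1) :=
          cons_esymm_eq hbea k'
        rw [Multiset.erase_comm] at hgoal_eq
        rcases le_or_gt 0 b with hbpos | hbneg
        · rw [hgoal_eq]
          have : 0 ≤ b * u.esymm k' := mul_nonneg hbpos hA.le
          linarith
        · by_contra hcon
          push_neg at hcon
          rw [hgoal_eq] at hcon
          set A := u.esymm k' with hAdef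
          set B := u.esymm (k' + 1) with hBdef
          set Cc := u.esymm (k' + 2) with hCdef
          have hP2 : 0 < a * A + B := by
            have := hGb (k' + 1) (by omega) (by omega)
            rw [cons_esymm_eq haeb k'] at this
            exact this
          have hP1 : 0 < a * B + Cc := by
            have := hGb (k' + 2) (by omega) le_rfl
            rw [cons_esymm_eq haeb (k' + 1)] at this
            exact this
          have hstot : 0 < b * (a * A + B) + (a * B + Cc) := by
            have := hG (k' + 2) (by omega) le_rfl
            rw [cons_esymm_eq hb (k' + 1), cons_esymm_eq haeb k',
              cons_esymm_eq haeb (k' + 1)] at this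
            exact this
          have hnewton : A * Cc ≤ B ^ 2 := newton_corollary u k'
          have q1 : (b * A + B) * (a * A + B) ≤ 0 :=
            mul_nonpos_of_nonpos_of_nonneg (by linarith) hP2.le
          have q2 : 0 < A * (b * (a * A + B) + (a * B + Cc)) := mul_pos hA hstot
          nlinarith [q1, q2, hnewton]

/-- Deleting any entry drops the cone index by at most one. -/
lemma gam_erase {k : ℕ} {s : Multiset ℝ} (hG : Gam k s) {a : ℝ} (ha : a ∈ s) :
    Gam (k - 1) (s.erase a) := by
  intro m h1 h2
  exact core_pos (Multiset.card s) s m a rfl (gam_mono hG (by omega)) ha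

lemma sub_erase_comm (s D : Multiset ℝ) (e : ℝ) : (s - D).erase e = s.erase e - D := by
  ext a
  rw [Multiset.count_sub]
  by_cases hae : a = e
  · subst hae
    rw [Multiset.count_erase_self, Multiset.count_erase_self, Multiset.count_sub]
    omega
  · rw [Multiset.count_erase_of_ne hae, Multiset.count_erase_of_ne hae, Multiset.count_sub]

lemma sub_erase_eq {s D : Multiset ℝ} {d : ℝ} (hD : D ≤ s) (hd : d ∈ D) :
    s - D.erase d = d ::ₘ (s - D) := by
  ext a
  rw [Multiset.count_sub, Multiset.count_cons, Multiset.count_sub]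
  have hle := Multiset.le_iff_count.mp hD a
  by_cases had : a = d
  · subst had
    rw [Multiset.count_erase_self]
    have h1 : 1 ≤ Multiset.count a D := Multiset.count_pos.mpr hd
    simp
    omega
  · rw [Multiset.count_erase_of_ne had]
    simp [had]

lemma erase_sub_erase_eq {s D : Multiset ℝ} {d : ℝ} (hD : D ≤ s) (hd : d ∈ D) :
    (s.erase d) - (D.erase d) = s - D := by
  ext a
  rw [Multiset.count_sub, Multiset.count_sub]
  have hle := Multiset.le_iff_count.mp hD a
  by_cases had : a = d
  · subst had
    rw [Multiset.count_erase_self, Multiset.count_erase_self]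
    have h1 : 1 ≤ Multiset.count a D := Multiset.count_pos.mpr hd
    omega
  · rw [Multiset.count_erase_of_ne had, Multiset.count_erase_of_ne had]

lemma gam_sub : ∀ (T : Multiset ℝ) {s : Multiset ℝ} {k : ℕ}, Gam k s → T ≤ s →
    Gam (k - Multiset.card T) (s - T) := by
  intro T
  induction T using Multiset.induction with
  | empty => intro s k hG _; simpa using hG
  | cons c T' ih =>
      intro s k hG hle
      have hc : c ∈ s := Multiset.mem_of_le hle (Multiset.mem_cons_self _ _)
      have hT' : T' ≤ s.erase c := by
        have := Multiset.erase_le_erase c hle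
        rwa [Multiset.erase_cons_head] at this
      have h1 : Gam (k - 1) (s.erase c) := gam_erase hG hc
      have h2 := ih h1 hT'
      rw [Multiset.sub_cons]
      have : k - 1 - Multiset.card T' = k - Multiset.card (c ::ₘ T') := by
        rw [Multiset.card_cons]; omega
      rwa [this] at h2

/-- Existence of a "dominant" sub-multiset of any size. -/
lemma exists_dominant (s : Multiset ℝ) : ∀ (r : ℕ), r ≤ Multiset.card s →
    ∃ D : Multiset ℝ, D ≤ s ∧ Multiset.card D = r ∧ ∀ d ∈ D, ∀ b ∈ s - D, b ≤ d := by
  intro r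
  induction r with
  | zero => exact fun _ => ⟨0, Multiset.zero_le s, rfl, fun d hd => by simp at hd⟩
  | succ r ih =>
      intro hr
      obtain ⟨D, hD, hcD, hdom⟩ := ih (by omega)
      have hsub : Multiset.card (s - D) = Multiset.card s - r := by
        rw [Multiset.card_sub hD, hcD]
      have hne : s - D ≠ 0 := by
        intro h
        rw [h] at hsub
        simp at hsub
        omega
      obtain ⟨e, he, hemax⟩ := exists_max (s - D) hne
      refine ⟨e ::ₘ D, ?_, by rw [Multiset.card_cons, hcD], ?_⟩
      · have h1 : e ::ₘ D = D + {e} := by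
          rw [← Multiset.singleton_add e D, _root_.add_comm]
        rw [h1]
        calc D + {e} ≤ D + (s - D) := by
              apply add_le_add_right
              exact Multiset.singleton_le.mpr he
          _ = s := by rw [_root_.add_comm]; exact tsub_add_cancel_of_le hD
      · intro d hd b hb
        have hbsub : b ∈ s - D := by
          have h2 : s - (e ::ₘ D) = (s - D).erase e := by
            rw [Multiset.sub_cons, ← sub_erase_comm]
          rw [h2] at hb
          exact Multiset.mem_of_le (Multiset.erase_le e (s - D)) hb
        rw [Multiset.mem_cons] at hd
        rcases hd with rfl | hd
        · exact hemax b hbsub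
        · exact hdom d hd b hbsub

/-- Entries of a dominant sub-multiset of size at most `k` in `Γ_k` are positive. -/
lemma dominant_pos {k : ℕ} {s D : Multiset ℝ} (hG : Gam k s) (hD : D ≤ s)
    (hdom : ∀ d ∈ D, ∀ b ∈ s - D, b ≤ d) (hcD : Multiset.card D ≤ k) :
    ∀ d ∈ D, 0 < d := by
  intro d hd
  have hDne : D ≠ 0 := by
    intro h; rw [h] at hd; simp at hd
  obtain ⟨d0, hd0, hd0min⟩ := exists_min D hDne
  suffices h : 0 < d0 by exact lt_of_lt_of_le h (hd0min d hd)
  set T := D.erase d0 with hTdef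
  have hTD : T ≤ D := Multiset.erase_le d0 D
  have hTs : T ≤ s := hTD.trans hD
  have hcT : Multiset.card T = Multiset.card D - 1 := by
    rw [hTdef, Multiset.card_erase_of_mem hd0, Nat.pred_eq_sub_one]
  have hcDpos : 1 ≤ Multiset.card D := by
    rcases Nat.eq_zero_or_pos (Multiset.card D) with h | h
    · rw [Multiset.card_eq_zero] at h; exact absurd h hDne
    · exact h
  have hG' : Gam (k - Multiset.card T) (s - T) := gam_sub T hG hTs
  have hlev : 1 ≤ k - Multiset.card T := by omega
  have hpos : 0 < (s - T).esymm 1 := hG' 1 le_rfl hlev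
  rw [esymm_one'] at hpos
  have hkey : s - T = d0 ::ₘ (s - D) := sub_erase_eq hD hd0
  rw [hkey, Multiset.sum_cons] at hpos
  have hsum : (s - D).sum ≤ (Multiset.card (s - D)) • d0 :=
    Multiset.sum_le_card_nsmul _ _ (fun x hx => hdom d0 hd0 x hx)
  rw [nsmul_eq_mul] at hsum
  by_contra hcon
  push_neg at hcon
  have : (Multiset.card (s - D) : ℝ) * d0 ≤ 0 :=
    mul_nonpos_of_nonneg_of_nonpos (Nat.cast_nonneg _) hcon
  linarith

/-- Lower bound: the product of a dominant set of size `m` bounds `esymm m` from below. -/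
lemma prod_le_esymm : ∀ (m : ℕ) (s D : Multiset ℝ), Gam (m + 1) s → D ≤ s →
    (∀ d ∈ D, ∀ b ∈ s - D, b ≤ d) → Multiset.card D = m →
    D.prod ≤ s.esymm m := by
  intro m
  induction m with
  | zero =>
      intro s D hG hD hdom hcD
      rw [Multiset.card_eq_zero] at hcD
      subst hcD
      rw [Multiset.prod_zero, esymm_zero']
  | succ m ih =>
      intro s D hG hD hdom hcD
      have hDne : D ≠ 0 := by
        intro h; rw [h] at hcD; simp at hcD
      obtain ⟨d, hd, hdmax⟩ := exists_max D hDne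
      have hsmax : ∀ b ∈ s, b ≤ d := by
        intro b hb
        have h1 : s = (s - D) + D := (tsub_add_cancel_of_le hD).symm
        rw [h1, Multiset.mem_add] at hb
        rcases hb with hb | hb
        · exact hdom d hd b hb
        · exact hdmax b hb
      have hds : d ∈ s := Multiset.mem_of_le hD hd
      have hdpos : 0 < d := by
        have h1 : 0 < s.esymm 1 := hG 1 le_rfl (by omega)
        rw [esymm_one'] at h1
        have hsum : s.sum ≤ (Multiset.card s) • d :=
          Multiset.sum_le_card_nsmul _ _ hsmax
        rw [nsmul_eq_mul] at hsum
        by_contra hcon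
        push_neg at hcon
        have : (Multiset.card s : ℝ) * d ≤ 0 :=
          mul_nonpos_of_nonneg_of_nonpos (Nat.cast_nonneg _) hcon
        linarith
      set t := s.erase d with htdef
      have hGt : Gam (m + 1) t := by
        have := gam_erase hG hds
        simpa using this
      have hDt : D.erase d ≤ t := Multiset.erase_le_erase d hD
      have hsubeq : t - D.erase d = s - D := by
        rw [htdef]
        exact erase_sub_erase_eq hD hd
      have hdomt : ∀ x ∈ D.erase d, ∀ b ∈ t - D.erase d, b ≤ x := by
        intro x hx b hb
        rw [hsubeq] at hb
        exact hdom x (Multiset.mem_of_le (Multiset.erase_le d D) hx) b hb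
      have hcDt : Multiset.card (D.erase d) = m := by
        rw [Multiset.card_erase_of_mem hd, hcD, Nat.pred_succ]
      have hih := ih t (D.erase d) hGt hDt hdomt hcDt
      have htop : 0 < t.esymm (m + 1) := hGt (m + 1) (by omega) le_rfl
      have hrec : s.esymm (m + 1) = d * t.esymm m + t.esymm (m + 1) := cons_esymm_eq hds m
      have hprod : D.prod = d * (D.erase d).prod := by
        conv_lhs => rw [← Multiset.cons_erase hd]
        rw [Multiset.prod_cons]
      rw [hprod, hrec]
      have h2 : d * (D.erase d).prod ≤ d * t.esymm m :=
        mul_le_mul_of_nonneg_left hih hdpos.le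
      linarith

lemma mprod_pos {s : Multiset ℝ} (h : ∀ x ∈ s, 0 < x) : 0 < s.prod := by
  induction s using Multiset.induction with
  | empty => simp
  | cons a t ih =>
      rw [Multiset.prod_cons]
      exact mul_pos (h a (Multiset.mem_cons_self _ _))
        (ih (fun x hx => h x (Multiset.mem_cons_of_mem hx)))

lemma max_pos {k : ℕ} {s : Multiset ℝ} (hG : Gam k s) (hk : 1 ≤ k) {d : ℝ} (hds : d ∈ s)
    (hmax : ∀ b ∈ s, b ≤ d) : 0 < d := by
  have h1 : 0 < s.esymm 1 := hG 1 le_rfl hk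
  rw [esymm_one'] at h1
  have hsum : s.sum ≤ (Multiset.card s) • d := Multiset.sum_le_card_nsmul _ _ hmax
  rw [nsmul_eq_mul] at hsum
  by_contra hcon
  push_neg at hcon
  have : (Multiset.card s : ℝ) * d ≤ 0 :=
    mul_nonpos_of_nonneg_of_nonpos (Nat.cast_nonneg _) hcon
  linarith

lemma esymm_le_choose_mul_prod : ∀ (n : ℕ) (s D : Multiset ℝ) (k : ℕ), Multiset.card s = n →
    Gam k s → D ≤ s → (∀ d ∈ D, ∀ b ∈ s - D, b ≤ d) → Multiset.card D = k → 1 ≤ k →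
    s.esymm k ≤ ((Multiset.card s).choose k : ℝ) * D.prod := by
  intro n
  induction n using Nat.strong_induction_on with
  | _ n IH =>
    intro s D k hn hG hD hdom hcD hk
    have hks : k ≤ Multiset.card s := gam_card hG hk
    rcases Nat.eq_or_lt_of_le hks with heq | hlt
    · -- card s = k : D = s
      have hDs : D = s := Multiset.eq_of_le_of_card_le hD (by omega)
      rw [hDs, heq, esymm_card, Nat.choose_self]
      norm_num
    · -- card s > k
      have hDne : D ≠ 0 := by
        intro h; rw [h] at hcD; simp at hcD; omega
      obtain ⟨d, hd, hdmax⟩ := exists_max D hDne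
      have hsmax : ∀ b ∈ s, b ≤ d := by
        intro b hb
        have h1 : s = (s - D) + D := (tsub_add_cancel_of_le hD).symm
        rw [h1, Multiset.mem_add] at hb
        rcases hb with hb | hb
        · exact hdom d hd b hb
        · exact hdmax b hb
      have hds : d ∈ s := Multiset.mem_of_le hD hd
      have hdpos : 0 < d := max_pos hG hk hds hsmax
      have hDpos : ∀ x ∈ D, 0 < x := dominant_pos hG hD hdom (by omega)
      have hprodD : D.prod = d * (D.erase d).prod := by
        conv_lhs => rw [← Multiset.cons_erase hd]
        rw [Multiset.prod_cons]
      have hprodpos : 0 < (D.erase d).prod :=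
        mprod_pos (fun x hx => hDpos x (Multiset.mem_of_le (Multiset.erase_le d D) hx))
      obtain ⟨k', rfl⟩ : ∃ k', k = k' + 1 := ⟨k - 1, by omega⟩
      rcases Nat.eq_zero_or_pos k' with hk0 | hk'pos
      · -- k = 1
        subst hk0
        have hD1 : D = {d} := by
          rw [Multiset.card_eq_one] at hcD
          obtain ⟨x, hx⟩ := hcD
          rw [hx]
          rw [hx, Multiset.mem_singleton] at hd
          rw [hd]
        rw [hD1, Multiset.prod_singleton]
        rw [esymm_one', Nat.choose_one_right]
        have hsum : s.sum ≤ (Multiset.card s) • d := Multiset.sum_le_card_nsmul _ _ hsmax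
        rwa [nsmul_eq_mul] at hsum
      · -- k ≥ 2
        set t := s.erase d with htdef
        have hct : Multiset.card t = n - 1 := by
          rw [htdef, Multiset.card_erase_of_mem hds, hn, Nat.pred_eq_sub_one]
        have hGt : Gam k' t := by
          have := gam_erase hG hds
          simpa using this
        have hDt : D.erase d ≤ t := Multiset.erase_le_erase d hD
        have hsubeq : t - D.erase d = s - D := by
          rw [htdef]; exact erase_sub_erase_eq hD hd
        have hdomt : ∀ x ∈ D.erase d, ∀ b ∈ t - D.erase d, b ≤ x := by
          intro x hx b hb
          rw [hsubeq] at hb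
          exact hdom x (Multiset.mem_of_le (Multiset.erase_le d D) hx) b hb
        have hcDt : Multiset.card (D.erase d) = k' := by
          rw [Multiset.card_erase_of_mem hd, hcD, Nat.pred_succ]
        have hIH1 := IH (n - 1) (by omega) t (D.erase d) k' hct hGt hDt hdomt hcDt hk'pos
        have hrec : s.esymm (k' + 1) = d * t.esymm k' + t.esymm (k' + 1) := cons_esymm_eq hds k'
        have hterm1 : d * t.esymm k' ≤ ((Multiset.card t).choose k' : ℝ) * D.prod := by
          have := mul_le_mul_of_nonneg_left hIH1 hdpos.le
          rw [hprodD]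
          calc d * t.esymm k' ≤ d * (((Multiset.card t).choose k' : ℝ) * (D.erase d).prod) := this
            _ = ((Multiset.card t).choose k' : ℝ) * (d * (D.erase d).prod) := by ring
        have hterm2 : t.esymm (k' + 1) ≤ ((Multiset.card t).choose (k' + 1) : ℝ) * D.prod := by
          rcases le_or_gt (t.esymm (k' + 1)) 0 with hneg | hpos
          · have : (0 : ℝ) ≤ ((Multiset.card t).choose (k' + 1) : ℝ) * D.prod := by
              apply mul_nonneg (Nat.cast_nonneg _)
              rw [hprodD]
              exact (mul_pos hdpos hprodpos).le
            linarith
          · have hGtk : Gam (k' + 1) t := by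
              intro m h1 h2
              rcases Nat.eq_or_lt_of_le h2 with hm | hm
              · rw [hm]; exact hpos
              · exact hGt m h1 (by omega)
            have hsDne : s - D ≠ 0 := by
              intro h
              have := Multiset.card_sub hD
              rw [h] at this
              simp at this
              omega
            obtain ⟨e, he, hemax⟩ := exists_max (s - D) hsDne
            set D' := e ::ₘ D.erase d with hD'def
            have hD't : D' ≤ t := by
              rw [hD'def, ← Multiset.singleton_add]
              calc {e} + D.erase d ≤ (t - D.erase d) + D.erase d := by
                    apply add_le_add_left
                    rw [hsubeq]
                    exact Multiset.singleton_le.mpr he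
                _ = t := tsub_add_cancel_of_le hDt
            have hcD' : Multiset.card D' = k' + 1 := by
              rw [hD'def, Multiset.card_cons, hcDt]
            have hdom' : ∀ x ∈ D', ∀ b ∈ t - D', b ≤ x := by
              intro x hx b hb
              have hb' : b ∈ s - D := by
                have h2 : t - D' = (s - D).erase e := by
                  rw [hD'def, Multiset.sub_cons, ← sub_erase_comm, hsubeq]
                rw [h2] at hb
                exact Multiset.mem_of_le (Multiset.erase_le e _) hb
              rw [hD'def, Multiset.mem_cons] at hx
              rcases hx with rfl | hx
              · exact hemax b hb'
              · exact hdom x (Multiset.mem_of_le (Multiset.erase_le d D) hx) b hb'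
            have hIH2 := IH (n - 1) (by omega) t D' (k' + 1) hct hGtk hD't hdom' hcD' (by omega)
            have hprodD' : D'.prod = e * (D.erase d).prod := by
              rw [hD'def, Multiset.prod_cons]
            have hed : e ≤ d := by
              apply hsmax
              exact Multiset.mem_of_le (tsub_le_self) he
            have hDD' : D'.prod ≤ D.prod := by
              rw [hprodD', hprodD]
              exact mul_le_mul_of_nonneg_right hed hprodpos.le
            calc t.esymm (k' + 1) ≤ ((Multiset.card t).choose (k' + 1) : ℝ) * D'.prod := hIH2
              _ ≤ ((Multiset.card t).choose (k' + 1) : ℝ) * D.prod :=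
                  mul_le_mul_of_nonneg_left hDD' (Nat.cast_nonneg _)
        -- combine
        have hchoose : ((Multiset.card s).choose (k' + 1) : ℝ)
            = ((Multiset.card t).choose k' : ℝ) + ((Multiset.card t).choose (k' + 1) : ℝ) := by
          have hcs : Multiset.card s = Multiset.card t + 1 := by
            rw [hct, hn]; omega
          rw [hcs, Nat.choose_succ_succ']
          push_cast
          ring
        rw [hrec, hchoose]
        have := add_le_add hterm1 hterm2
        linarith [this]

lemma key_bound {k : ℕ} {s : Multiset ℝ} {c : ℝ} (hG : Gam (k + 1) s) (hc : 0 < c)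
    (hcount : Multiset.countP (fun b => c < b) s ≤ k) :
    s.esymm (k + 1) ≤ ((Multiset.card s).choose (k + 1) : ℝ) * c * s.esymm k := by
  classical
  have hks : k + 1 ≤ Multiset.card s := gam_card hG (by omega)
  obtain ⟨D, hD, hcD, hdom⟩ := exists_dominant s (k + 1) hks
  have hDpos : ∀ x ∈ D, 0 < x := dominant_pos hG hD hdom (by omega)
  have hDne : D ≠ 0 := by
    intro h; rw [h] at hcD; simp at hcD
  obtain ⟨d0, hd0, hd0min⟩ := exists_min D hDne
  have hd0c : d0 ≤ c := by
    by_contra hcon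
    push_neg at hcon
    have hall : ∀ x ∈ D, c < x := fun x hx => lt_of_lt_of_le hcon (hd0min x hx)
    have h1 : Multiset.countP (fun b => c < b) D = Multiset.card D :=
      Multiset.countP_eq_card.mpr hall
    have h2 : Multiset.countP (fun b => c < b) D ≤ Multiset.countP (fun b => c < b) s :=
      Multiset.countP_le_of_le _ hD
    omega
  have hdomE : ∀ x ∈ D.erase d0, ∀ b ∈ s - D.erase d0, b ≤ x := by
    intro x hx b hb
    rw [sub_erase_eq hD hd0, Multiset.mem_cons] at hb
    rcases hb with hbe | hb
    · rw [hbe]; exact hd0min x (Multiset.mem_of_le (Multiset.erase_le d0 D) hx)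
    · exact hdom x (Multiset.mem_of_le (Multiset.erase_le d0 D) hx) b hb
  have hcDE : Multiset.card (D.erase d0) = k := by
    rw [Multiset.card_erase_of_mem hd0, hcD, Nat.pred_succ]
  have hlow := prod_le_esymm k s (D.erase d0) hG ((Multiset.erase_le d0 D).trans hD) hdomE hcDE
  have hup := esymm_le_choose_mul_prod (Multiset.card s) s D (k + 1) rfl hG hD hdom hcD (by omega)
  have hprodD : D.prod = d0 * (D.erase d0).prod := by
    conv_lhs => rw [← Multiset.cons_erase hd0]
    rw [Multiset.prod_cons]
  have hprodpos : 0 < (D.erase d0).prod :=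
    mprod_pos (fun x hx => hDpos x (Multiset.mem_of_le (Multiset.erase_le d0 D) hx))
  calc s.esymm (k + 1) ≤ ((Multiset.card s).choose (k + 1) : ℝ) * D.prod := hup
    _ ≤ ((Multiset.card s).choose (k + 1) : ℝ) * (c * s.esymm k) := by
        apply mul_le_mul_of_nonneg_left _ (Nat.cast_nonneg _)
        rw [hprodD]
        calc d0 * (D.erase d0).prod ≤ c * (D.erase d0).prod :=
              mul_le_mul_of_nonneg_right hd0c hprodpos.le
          _ ≤ c * s.esymm k := mul_le_mul_of_nonneg_left hlow hc.le
    _ = ((Multiset.card s).choose (k + 1) : ℝ) * c * s.esymm k := by ring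

lemma main_bound {κ : ℕ} {a : ℝ} {t : Multiset ℝ} (hG : Gam (κ + 1) (a ::ₘ t)) (hκ : 1 ≤ κ)
    (hkt : κ + 1 ≤ Multiset.card t) (ha : 0 < a)
    (hcount : Multiset.countP (fun b => a < b) t ≤ κ) :
    (1 + ((Multiset.card t).choose (κ + 1) : ℝ))⁻¹ * (a ::ₘ t).esymm (κ + 1) ≤ a * t.esymm κ := by
  set C : ℝ := ((Multiset.card t).choose (κ + 1) : ℝ) with hCdef
  have hC0 : 0 ≤ C := Nat.cast_nonneg _
  have hC1 : 0 < 1 + C := by linarith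
  have hE : (a ::ₘ t).esymm (κ + 1) = a * t.esymm κ + t.esymm (κ + 1) := esymm_cons a t κ
  have hEpos : 0 < (a ::ₘ t).esymm (κ + 1) := hG (κ + 1) (by omega) le_rfl
  have hBpos : 0 < t.esymm κ := by
    have := core_pos (Multiset.card (a ::ₘ t)) (a ::ₘ t) κ a rfl
      (gam_mono hG (by omega)) (Multiset.mem_cons_self _ _)
    rwa [Multiset.erase_cons_head] at this
  rw [inv_mul_le_iff₀ hC1]
  rcases le_or_gt (t.esymm (κ + 1)) 0 with hneg | hpos
  · have h1 : (a ::ₘ t).esymm (κ + 1) ≤ a * t.esymm κ := by rw [hE]; linarith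
    have h2 : 0 < a * t.esymm κ := mul_pos ha hBpos
    nlinarith
  · have hGt : Gam (κ + 1) t := by
      intro m h1 h2
      rcases Nat.eq_or_lt_of_le h2 with hm | hm
      · rw [hm]; exact hpos
      · have := core_pos (Multiset.card (a ::ₘ t)) (a ::ₘ t) m a rfl
          (gam_mono hG (by omega)) (Multiset.mem_cons_self _ _)
        rwa [Multiset.erase_cons_head] at this
    have hkb := key_bound (k := κ) (c := a) hGt ha hcount
    rw [hE]
    have : t.esymm (κ + 1) ≤ C * (a * t.esymm κ) := by
      rw [hCdef]
      calc t.esymm (κ + 1) ≤ ((Multiset.card t).choose (κ + 1) : ℝ) * a * t.esymm κ := hkb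
        _ = ((Multiset.card t).choose (κ + 1) : ℝ) * (a * t.esymm κ) := by ring
    nlinarith [mul_pos ha hBpos]

lemma countP_mono_pred {α : Type*} (p q : α → Prop) [DecidablePred p] [DecidablePred q]
    (u : Multiset α) (h : ∀ a ∈ u, p a → q a) : u.countP p ≤ u.countP q := by
  induction u using Multiset.induction with
  | empty => simp
  | cons a t ih =>
      rw [Multiset.countP_cons, Multiset.countP_cons]
      have h1 := ih (fun x hx => h x (Multiset.mem_cons_of_mem hx))
      have h2 := h a (Multiset.mem_cons_self _ _)
      split_ifs with hp hq hq
      · omega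
      · exact absurd (h2 hp) hq
      · omega
      · omega

end SkAux

open SkAux

theorem Skjj_ge_theta_Sk_div_lamj
    (n : ℕ) (hn : 2 ≤ n) (k : ℕ) (hk1 : 2 ≤ k) (hk : k ≤ n)
    (α : ℝ) (hα : 0 < α) :
    ∃ θ : ℝ, 0 < θ ∧
      ∀ lam : Fin n → ℝ, lam ∈ GammaTilde n α k → Antitone lam →
        ∀ j : Fin n, (j : ℕ) < k - 1 →
          SDel n α ((k : ℤ) - 1) lam j ≥ θ * SZ n α k lam / lam j := by
  classical
  refine ⟨(1 + (n.choose k : ℝ))⁻¹, by positivity, ?_⟩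
  intro lam hmem hanti j hj
  obtain ⟨hGamma, hSk⟩ := hmem
  set κ := k - 1 with hκdef
  have hκ1 : 1 ≤ κ := by omega
  have hκk : κ + 1 = k := by omega
  set M : Multiset ℝ := (Finset.univ.val.map lam) with hMdef
  set Mj : Multiset ℝ := ((Finset.univ.erase j).val.map lam) with hMjdef
  set t : Multiset ℝ := α ::ₘ Mj with htdef
  -- translation lemmas
  have esymmZ_eq : ∀ m : ℕ, esymmZ n (m : ℤ) lam = M.esymm m := by
    intro m
    rw [esymmZ, if_neg (by omega), Int.toNat_natCast, hMdef, Finset.esymm_map_val]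
  have esymmDel_eq : ∀ m : ℕ, esymmDel n (m : ℤ) lam j = Mj.esymm m := by
    intro m
    rw [esymmDel, if_neg (by omega), Int.toNat_natCast, hMjdef, Finset.esymm_map_val]
  have hMdecomp : M = lam j ::ₘ Mj := by
    have h1 : (Finset.univ : Finset (Fin n)).val = j ::ₘ (Finset.univ.val.erase j) :=
      (Multiset.cons_erase (by simp)).symm
    have h2 : Multiset.map lam (Finset.univ.val)
        = lam j ::ₘ Multiset.map lam (Finset.univ.val.erase j) := by
      conv_lhs => rw [h1]
      rw [Multiset.map_cons]
    rw [hMdef, hMjdef, Finset.erase_val]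
    exact h2
  have hcardMj : Multiset.card Mj = n - 1 := by
    rw [hMjdef, Multiset.card_map, Finset.erase_val,
      Multiset.card_erase_of_mem (by simp : j ∈ Finset.univ.val)]
    simp [Nat.pred_eq_sub_one]
  have hcardt : Multiset.card t = n := by
    rw [htdef, Multiset.card_cons, hcardMj]
    omega
  have hSZ_eq : ∀ m : ℕ, 1 ≤ m → SZ n α (m : ℤ) lam = (α ::ₘ M).esymm m := by
    intro m hm
    obtain ⟨m', rfl⟩ : ∃ m', m = m' + 1 := ⟨m - 1, by omega⟩
    rw [esymm_cons, SZ]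
    rw [show ((m' + 1 : ℕ) : ℤ) - 1 = (m' : ℤ) by push_cast; ring]
    rw [esymmZ_eq, esymmZ_eq]
    push_cast
    ring
  -- Gamma facts for M
  have hGamM : ∀ m : ℕ, 1 ≤ m → m ≤ κ → 0 < M.esymm m := by
    intro m h1 h2
    rw [← esymmZ_eq]
    exact hGamma m h1 (by omega)
  -- Gam k (lam j ::ₘ t)
  have hst : lam j ::ₘ t = α ::ₘ M := by
    rw [htdef, hMdecomp, Multiset.cons_swap]
  have hGs : Gam (κ + 1) (lam j ::ₘ t) := by
    intro m h1 h2
    rw [hst]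
    rcases Nat.eq_or_lt_of_le h2 with hm | hm
    · rw [hm, hκk, ← hSZ_eq k (by omega)]
      exact hSk
    · have hmκ : m ≤ κ := by omega
      obtain ⟨m', rfl⟩ : ∃ m', m = m' + 1 := ⟨m - 1, by omega⟩
      rw [esymm_cons]
      have hp1 : 0 < M.esymm (m' + 1) := hGamM (m' + 1) (by omega) hmκ
      have hp0 : 0 ≤ M.esymm m' := by
        rcases Nat.eq_zero_or_pos m' with h0 | h0
        · rw [h0, esymm_zero']; norm_num
        · exact (hGamM m' h0 (by omega)).le
      have : 0 ≤ α * M.esymm m' := mul_nonneg hα.le hp0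
      linarith
  -- lam j > 0
  have hlamj : 0 < lam j := by
    set p : Fin n → Prop := fun i => i < j with hpdef
    set T : Multiset ℝ := ((Finset.univ.filter p).val.map lam) with hTdef
    set Tc : Multiset ℝ := ((Finset.univ.filter (fun i => ¬ p i)).val.map lam) with hTcdef
    have hsplit : T + Tc = M := by
      rw [hTdef, hTcdef, hMdef, ← Multiset.map_add, Finset.filter_val, Finset.filter_val,
        Multiset.filter_add_not]
    have hTle : T ≤ M := le_of_add_le_left hsplit.le
    have hMT : M - T = Tc := by
      rw [← hsplit, _root_.add_comm, add_tsub_cancel_right]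
    have hcardT : Multiset.card T = (j : ℕ) := by
      rw [hTdef, Multiset.card_map, ← Finset.card_def]
      have : Finset.univ.filter p = Finset.Iio j := by
        ext i
        simp [hpdef, Finset.mem_Iio]
      rw [this, Fin.card_Iio]
    have hGM : Gam κ M := fun m h1 h2 => hGamM m h1 h2
    have hGsub := gam_sub T hGM hTle
    rw [hMT, hcardT] at hGsub
    have hjmem : lam j ∈ Tc := by
      rw [hTcdef]
      apply Multiset.mem_map_of_mem
      rw [Finset.mem_val, Finset.mem_filter]
      exact ⟨Finset.mem_univ _, by simp [hpdef]⟩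
    have hjmax : ∀ b ∈ Tc, b ≤ lam j := by
      intro b hb
      rw [hTcdef, Multiset.mem_map] at hb
      obtain ⟨i, hi, rfl⟩ := hb
      rw [Finset.mem_val, Finset.mem_filter] at hi
      have : j ≤ i := by
        have := hi.2
        simp [hpdef] at this
        exact this
      exact hanti this
    exact max_pos hGsub (by omega) hjmem hjmax
  -- count hypothesis
  have hcount : Multiset.countP (fun b => lam j < b) t ≤ κ := by
    rw [htdef, Multiset.countP_cons]
    have h1 : Multiset.countP (fun b => lam j < b) Mj ≤ (j : ℕ) := by
      rw [hMjdef, Multiset.countP_map, ← Multiset.countP_eq_card_filter]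
      have h2 : Multiset.countP (fun i => lam j < lam i) (Finset.univ.erase j).val
          ≤ Multiset.countP (fun i => i < j) (Finset.univ.erase j).val := by
        apply countP_mono_pred
        intro a _ hpa
        by_contra hcon
        push_neg at hcon
        exact absurd hpa (not_lt.mpr (hanti hcon))
      have h3 : Multiset.countP (fun i => i < j) (Finset.univ.erase j).val
          ≤ Multiset.countP (fun i => i < j) (Finset.univ : Finset (Fin n)).val :=
        Multiset.countP_le_of_le _ (Finset.val_le_iff.mpr (Finset.erase_subset _ _))
      have h4 : Multiset.countP (fun i => i < j) (Finset.univ : Finset (Fin n)).val = (j : ℕ) := by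
        rw [Multiset.countP_eq_card_filter, ← Finset.filter_val, ← Finset.card_def]
        have : Finset.univ.filter (fun i => i < j) = Finset.Iio j := by
          ext i
          simp [Finset.mem_Iio]
        rw [this, Fin.card_Iio]
      omega
    split_ifs <;> omega
  -- main bound
  have hmain := main_bound (κ := κ) (a := lam j) (t := t) hGs hκ1
    (by rw [hcardt]; omega) hlamj hcount
  rw [hcardt, hκk] at hmain
  -- translate the conclusion
  have hSDel : SDel n α ((k : ℤ) - 1) lam j = t.esymm κ := by
    obtain ⟨κ', hκ'⟩ : ∃ κ', κ = κ' + 1 := ⟨κ - 1, by omega⟩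
    rw [hκ', htdef, esymm_cons, SDel]
    rw [show ((k : ℤ) - 1) = ((κ' + 1 : ℕ) : ℤ) by push_cast; omega]
    rw [show ((κ' + 1 : ℕ) : ℤ) - 1 = ((κ' : ℕ) : ℤ) by push_cast; ring]
    rw [esymmDel_eq, esymmDel_eq]
    ring
  have hSZk : SZ n α (k : ℤ) lam = (lam j ::ₘ t).esymm k := by
    rw [hst, hSZ_eq k (by omega)]
  rw [ge_iff_le, div_le_iff₀ hlamj, hSDel, hSZk]
  calc (1 + (n.choose k : ℝ))⁻¹ * (lam j ::ₘ t).esymm k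
      ≤ lam j * t.esymm κ := hmain
    _ = t.esymm κ * lam j := by ring
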